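/- Let G be a horizontal symmetry group of a discrete mechanical system with discrete Lagrangian L_d that is both regular and G-regular, and momentum map J_d(q₀,q₁)(ξ) = −D₁L_d(q₀,q₁)(ξ_Q(q₀)). Then for all q₀ ∈ Q, μ ∈ 𝔤*, and q₁ in the intersection of the orbit G·q₀ with (J_d^{q₀})⁻¹(μ), one has the direct sum decomposition T_{q₁}Q = T_{q₁}(G·q₀) ⊕ T_{q₁}(J_d^{q₀})⁻¹(μ). -/

import Mathlib

open scoped Manifold

set_option maxHeartbeats 2000000 in
/-- For a horizontal symmetry group `G` with `L` regular and
`G`-regular, for every `q₀ ∈ Q`, `μ ∈ 𝔤*` and `q₁` in the intersection of the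
orbit `G·q₀` with the momentum level set `(J_d^{q₀})⁻¹(μ)`, one has
`T_{q₁}Q = T_{q₁}(G·q₀) ⊕ T_{q₁}(J_d^{q₀})⁻¹(μ)`.  The orbit tangent space is
the range of the infinitesimal-generator map `ξ ↦ ξ_Q(q₁)` and the tangent
space of the level set is the kernel of the differential of `J_d^{q₀}`. -/
theorem orbit_level_set_complementary
    {EG : Type*} [NormedAddCommGroup EG] [NormedSpace ℝ EG]
    [FiniteDimensional ℝ EG]
    {HG : Type*} [TopologicalSpace HG] (IG : ModelWithCorners ℝ EG HG)
    {G : Type*} [TopologicalSpace G] [ChartedSpace HG G] [Group G]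
    [LieGroup IG (⊤ : ℕ∞) G]
    {EQ : Type*} [NormedAddCommGroup EQ] [NormedSpace ℝ EQ]
    [FiniteDimensional ℝ EQ]
    {HQ : Type*} [TopologicalSpace HQ] (IQ : ModelWithCorners ℝ EQ HQ)
    {Q : Type*} [TopologicalSpace Q] [ChartedSpace HQ Q]
    [IsManifold IQ (⊤ : ℕ∞) Q]
    [MulAction G Q]
    (hact : ContMDiff (IG.prod IQ) IQ (⊤ : ℕ∞) (fun p : G × Q => p.1 • p.2))
    (L : Q × Q → ℝ)
    (hL : ContMDiff (IQ.prod IQ) 𝓘(ℝ, ℝ) (⊤ : ℕ∞) L)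
    (hinv : ∀ (g : G) (q₀ q₁ : Q), L (g • q₀, g • q₁) = L (q₀, q₁))
    -- regularity
    (hreg : ∀ (q₀ q₁ : Q) (X₀ : TangentSpace IQ q₀),
      (∀ X₁ : TangentSpace IQ q₁,
        mfderiv IQ 𝓘(ℝ, ℝ)
          (fun y => mfderiv IQ 𝓘(ℝ, ℝ) (fun x => L (x, y)) q₀ X₀) q₁ X₁ = (0 : ℝ))
      → X₀ = 0)
    -- G-regularity: nondegeneracy of D₂D₁L restricted to vertical spaces
    (hGreg : ∀ (q₀ q₁ : Q) (X₀ : TangentSpace IQ q₀),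
      X₀ ∈ LinearMap.range (mfderiv IG IQ (fun h : G => h • q₀) (1 : G)).toLinearMap →
      (∀ X₁ ∈ LinearMap.range (mfderiv IG IQ (fun h : G => h • q₁) (1 : G)).toLinearMap,
        mfderiv IQ 𝓘(ℝ, ℝ)
          (fun y => mfderiv IQ 𝓘(ℝ, ℝ) (fun x => L (x, y)) q₀ X₀) q₁ X₁ = (0 : ℝ))
      → X₀ = 0)
    (Jd : Q × Q → (EG →L[ℝ] ℝ))
    (hJd : ∀ (p : Q × Q) (ξ : TangentSpace IG (1 : G)),
      Jd p ξ = -(mfderiv IQ 𝓘(ℝ, ℝ) (fun x => L (x, p.2)) p.1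
        ((mfderiv IG IQ (fun h : G => h • p.1) (1 : G)) ξ)))
    (q₀ : Q) (μ : EG →L[ℝ] ℝ) (q₁ : Q)
    (horb : q₁ ∈ MulAction.orbit G q₀) (hμ : Jd (q₀, q₁) = μ) :
    IsCompl
      (LinearMap.range (mfderiv IG IQ (fun h : G => h • q₁) (1 : G)).toLinearMap)
      (LinearMap.ker (mfderiv IQ 𝓘(ℝ, EG →L[ℝ] ℝ) (fun y => Jd (q₀, y)) q₁).toLinearMap) := by
  clear hreg hinv hμ μ
  haveI : FiniteDimensional ℝ (TangentSpace IQ q₁) := ‹FiniteDimensional ℝ EQ›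
  haveI : FiniteDimensional ℝ (TangentSpace IQ q₀) := ‹FiniteDimensional ℝ EQ›
  -- notation
  set A₀ : TangentSpace IG (1 : G) →L[ℝ] TangentSpace IQ q₀ :=
    mfderiv IG IQ (fun h : G => h • q₀) (1 : G) with hA₀
  set A₁ : TangentSpace IG (1 : G) →L[ℝ] TangentSpace IQ q₁ :=
    mfderiv IG IQ (fun h : G => h • q₁) (1 : G) with hA₁
  set V₀ : Submodule ℝ (TangentSpace IQ q₀) := LinearMap.range A₀.toLinearMap with hV₀
  set V₁ : Submodule ℝ (TangentSpace IQ q₁) := LinearMap.range A₁.toLinearMap with hV₁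
  -- the partial derivative D₁L(·, y) at q₀
  set F : Q → (EQ →L[ℝ] ℝ) := fun y => mfderiv IQ 𝓘(ℝ, ℝ) (fun x => L (x, y)) q₀ with hF
  -- F is smooth
  have hFs : ContMDiffAt IQ 𝓘(ℝ, EQ →L[ℝ] ℝ) (⊤ : ℕ∞) F q₁ := by
    have hf : ContMDiffAt (IQ.prod IQ) 𝓘(ℝ, ℝ) (⊤ : ℕ∞)
        (Function.uncurry fun (y x : Q) => L (x, y)) (q₁, q₀) :=
      (hL.comp (contMDiff_snd.prodMk contMDiff_fst)).contMDiffAt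
    have h := hf.mfderiv (m := (⊤ : ℕ∞)) (fun (y x : Q) => L (x, y)) (fun _ => q₀)
      contMDiffAt_const (by exact_mod_cast (le_top : (⊤ : ℕ∞) + 1 ≤ ⊤))
    refine h.congr_of_eventuallyEq (Filter.Eventually.of_forall fun y => ?_)
    erw [inTangentCoordinates_eq]
    · rw [tangentBundleCore_coordChange_model_space]
      ext v
      simp only [ContinuousLinearMap.coe_comp', Function.comp_apply,
        ContinuousLinearMap.coe_id', id_eq, hF]
      erw [ContinuousLinearMap.comp_apply, (tangentBundleCore IQ Q).coordChange_self (achart HQ q₀) q₀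
        (mem_chart_source HQ q₀) v]
    · exact mem_chart_source HQ q₀
    · exact Set.mem_univ _
  have hFd : MDifferentiableAt IQ 𝓘(ℝ, EQ →L[ℝ] ℝ) F q₁ := hFs.mdifferentiableAt (by simp)
  -- the second derivative
  set M : TangentSpace IQ q₁ →L[ℝ] (EQ →L[ℝ] ℝ) :=
    mfderiv IQ 𝓘(ℝ, EQ →L[ℝ] ℝ) F q₁ with hM
  -- directional second derivatives
  have key1 : ∀ X₀ : EQ,
      mfderiv IQ 𝓘(ℝ, ℝ) (fun y => F y X₀) q₁
        = (ContinuousLinearMap.apply ℝ ℝ X₀).comp M := by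
    intro X₀
    have h1 : (fun y => F y X₀) = (ContinuousLinearMap.apply ℝ ℝ X₀) ∘ F := rfl
    rw [h1, mfderiv_comp q₁ (ContinuousLinearMap.apply ℝ ℝ X₀).mdifferentiableAt hFd,
      ContinuousLinearMap.mfderiv_eq, hM]
    rfl
  -- the momentum map in terms of F
  set Ψ : (EQ →L[ℝ] ℝ) →L[ℝ] (EG →L[ℝ] ℝ) :=
    -(((ContinuousLinearMap.compL ℝ EG EQ ℝ).flip) A₀) with hΨ
  have hΨ_apply : ∀ (φ : EQ →L[ℝ] ℝ) (ξ : EG), Ψ φ ξ = -(φ (A₀ ξ)) := by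
    intro φ ξ
    simp only [hΨ, ContinuousLinearMap.neg_apply, ContinuousLinearMap.flip_apply,
      ContinuousLinearMap.compL_apply, ContinuousLinearMap.coe_comp', Function.comp_apply]
    rfl
  have hfΨ : (fun y => Jd (q₀, y)) = Ψ ∘ F := by
    funext y
    ext ξ
    rw [Function.comp_apply, hΨ_apply, hJd (q₀, y) ξ]
    rfl
  -- the differential of the momentum map
  have hD : mfderiv IQ 𝓘(ℝ, EG →L[ℝ] ℝ) (fun y => Jd (q₀, y)) q₁ = Ψ.comp M := by
    rw [hfΨ, mfderiv_comp q₁ Ψ.mdifferentiableAt hFd, ContinuousLinearMap.mfderiv_eq, hM]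
    rfl
  -- kernel characterization
  have hker : ∀ X : TangentSpace IQ q₁,
      (X ∈ LinearMap.ker (mfderiv IQ 𝓘(ℝ, EG →L[ℝ] ℝ) (fun y => Jd (q₀, y)) q₁).toLinearMap
        ↔ ∀ u ∈ V₀, M X u = 0) := by
    intro X
    rw [LinearMap.mem_ker, hD]
    show Ψ (M X) = 0 ↔ _
    constructor
    · rintro h u ⟨ξ, rfl⟩
      have h2 : Ψ (M X) ξ = 0 := by rw [h]; rfl
      erw [hΨ_apply] at h2
      exact neg_eq_zero.mp h2
    · intro h
      show Ψ (M X) = (0 : EG →L[ℝ] ℝ)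
      ext ξ
      rw [hΨ_apply, h (A₀ ξ) ⟨ξ, rfl⟩, neg_zero, ContinuousLinearMap.zero_apply]
  -- group translation: dim V₁ = dim V₀
  obtain ⟨g, hg⟩ := horb
  set σ : Q → Q := fun x => g • x with hσdef
  set σ' : Q → Q := fun x => g⁻¹ • x with hσ'def
  set c : G → G := fun h => g⁻¹ * h * g with hcdef
  set c' : G → G := fun h => g * h * g⁻¹ with hc'def
  have hσs : ContMDiff IQ IQ (⊤ : ℕ∞) σ := hact.comp (contMDiff_const.prodMk contMDiff_id)
  have hσ's : ContMDiff IQ IQ (⊤ : ℕ∞) σ' := hact.comp (contMDiff_const.prodMk contMDiff_id)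
  have hρs : ContMDiff IG IQ (⊤ : ℕ∞) (fun k : G => k • q₀) :=
    hact.comp (contMDiff_id.prodMk contMDiff_const)
  have hcs : ContMDiff IG IG (⊤ : ℕ∞) c := (contMDiff_const.mul contMDiff_id).mul contMDiff_const
  have hc's : ContMDiff IG IG (⊤ : ℕ∞) c' := (contMDiff_const.mul contMDiff_id).mul contMDiff_const
  have hc1 : c 1 = 1 := by show g⁻¹ * 1 * g = 1; group
  have hc'1 : c' 1 = 1 := by show g * 1 * g⁻¹ = 1; group
  set T : TangentSpace IQ q₀ →L[ℝ] TangentSpace IQ q₁ := mfderiv IQ IQ σ q₀ with hT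
  set T' : TangentSpace IQ q₁ →L[ℝ] TangentSpace IQ q₀ := mfderiv IQ IQ σ' q₁ with hT'
  set C : TangentSpace IG (1 : G) →L[ℝ] TangentSpace IG (1 : G) := mfderiv IG IG c 1 with hC
  set C' : TangentSpace IG (1 : G) →L[ℝ] TangentSpace IG (1 : G) := mfderiv IG IG c' 1 with hC'
  have hσq₀ : σ q₀ = q₁ := hg
  -- composition formula for A₁
  have hfun : (fun h : G => h • q₁) = σ ∘ (fun k : G => k • q₀) ∘ c := by
    funext h
    show h • q₁ = g • ((g⁻¹ * h * g) • q₀)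
    rw [← hg, smul_smul, smul_smul]
    congr 1
    group
  have hinner1 : ((fun k : G => k • q₀) ∘ c) 1 = q₀ := by
    show c 1 • q₀ = q₀
    rw [hc1, one_smul]
  have e1 : A₁ = mfderiv IG IQ (σ ∘ (fun k : G => k • q₀) ∘ c) (1 : G) := by
    rw [hA₁]
    exact Filter.EventuallyEq.mfderiv_eq (by rw [hfun])
  have e3 : ∀ ξ : TangentSpace IG (1 : G),
      mfderiv IG IQ ((fun k : G => k • q₀) ∘ c) (1 : G) ξ = A₀ (C ξ) := fun ξ =>
    mfderiv_comp_apply_of_eq (1 : G) (hρs.mdifferentiableAt (by simp))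
      (hcs.mdifferentiableAt (by simp)) hc1 ξ
  have hA₁app : ∀ ξ : TangentSpace IG (1 : G), A₁ ξ = T (A₀ (C ξ)) := by
    intro ξ
    have e2 := mfderiv_comp_apply_of_eq (1 : G) (hσs.mdifferentiableAt (by simp))
      ((hρs.comp hcs).mdifferentiableAt (by simp)) hinner1 ξ
    rw [e3 ξ] at e2
    rw [e1]
    exact e2
  -- T is injective
  have hστ : σ' ∘ σ = id := by
    funext x
    show g⁻¹ • (g • x) = id x
    exact inv_smul_smul g x
  have hTleft : ∀ v : TangentSpace IQ q₀, T' (T v) = v := by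
    intro v
    have h1 := mfderiv_comp_apply_of_eq q₀ (hσ's.mdifferentiableAt (by simp))
      (hσs.mdifferentiableAt (by simp)) hσq₀ v
    have h2 : mfderiv IQ IQ (σ' ∘ σ) q₀ = mfderiv IQ IQ id q₀ :=
      Filter.EventuallyEq.mfderiv_eq (by rw [hστ])
    rw [h2, mfderiv_id] at h1
    exact h1.symm
  have hTinj : Function.Injective T := Function.LeftInverse.injective hTleft
  -- C is surjective
  have hcc' : c ∘ c' = id := by
    funext h
    show g⁻¹ * (g * h * g⁻¹) * g = id h
    show g⁻¹ * (g * h * g⁻¹) * g = h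
    group
  have hCright : ∀ w : TangentSpace IG (1 : G), C (C' w) = w := by
    intro w
    have h1 := mfderiv_comp_apply_of_eq (1 : G) (hcs.mdifferentiableAt (by simp))
      (hc's.mdifferentiableAt (by simp)) hc'1 w
    have h2 : mfderiv IG IG (c ∘ c') 1 = mfderiv IG IG id 1 :=
      Filter.EventuallyEq.mfderiv_eq (by rw [hcc'])
    rw [h2, mfderiv_id] at h1
    exact h1.symm
  have hCsurj : Function.Surjective C := fun w => ⟨C' w, hCright w⟩
  -- V₁ is the image of V₀ under T
  have hV₁map : V₁ = Submodule.map (T : TangentSpace IQ q₀ →ₗ[ℝ] TangentSpace IQ q₁) V₀ := by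
    ext v
    constructor
    · rintro ⟨ξ, rfl⟩
      exact ⟨A₀ (C ξ), ⟨C ξ, rfl⟩, (hA₁app ξ).symm⟩
    · rintro ⟨u, ⟨ξ, rfl⟩, rfl⟩
      obtain ⟨η, hη⟩ := hCsurj ξ
      refine ⟨η, ?_⟩
      show A₁ η = T (A₀ ξ)
      rw [hA₁app η, hη]
  have hfr : Module.finrank ℝ V₁ = Module.finrank ℝ V₀ := by
    rw [hV₁map]
    exact ((Submodule.equivMapOfInjective _ hTinj V₀).symm.finrank_eq)
  -- the bilinear pairing V₀ × V₁ → ℝ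
  set φ : V₀ →ₗ[ℝ] Module.Dual ℝ V₁ :=
    { toFun := fun u =>
        { toFun := fun x => M x.1 u.1
          map_add' := by intro x y; simp; rfl
          map_smul' := by intro r x; simp; rfl }
      map_add' := by intro u v; ext x; exact (M x.1).map_add u.1 v.1
      map_smul' := by intro r u; ext x; exact (M x.1).map_smul r u.1 } with hφ
  have hφinj : Function.Injective φ := by
    rw [← LinearMap.ker_eq_bot]
    apply LinearMap.ker_eq_bot'.mpr
    intro u hu
    have h0 : (u : TangentSpace IQ q₀) = 0 := by
      refine hGreg q₀ q₁ u.1 u.2 ?_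
      intro X₁ hX₁
      show mfderiv IQ 𝓘(ℝ, ℝ) (fun y => F y u.1) q₁ X₁ = 0
      erw [key1]
      show M X₁ u.1 = 0
      exact LinearMap.congr_fun hu ⟨X₁, hX₁⟩
    exact Subtype.ext h0
  have hφsurj : Function.Surjective φ := by
    rw [← LinearMap.range_eq_top]
    apply Submodule.eq_top_of_finrank_eq
    rw [LinearMap.finrank_range_of_inj hφinj, Subspace.dual_finrank_eq]
    exact hfr.symm
  -- disjointness
  have hdisj : Disjoint V₁
      (LinearMap.ker (mfderiv IQ 𝓘(ℝ, EG →L[ℝ] ℝ) (fun y => Jd (q₀, y)) q₁).toLinearMap) := by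
    rw [Submodule.disjoint_def]
    intro x hx hxk
    have hx0 : ∀ u ∈ V₀, M x u = 0 := (hker x).mp hxk
    have hall : ∀ ψ : Module.Dual ℝ V₁, ψ ⟨x, hx⟩ = 0 := by
      intro ψ
      obtain ⟨u, rfl⟩ := hφsurj ψ
      exact hx0 u.1 u.2
    have := (Module.forall_dual_apply_eq_zero_iff ℝ (⟨x, hx⟩ : V₁)).mp hall
    exact congrArg Subtype.val this
  -- the auxiliary map θ
  set θ : TangentSpace IQ q₁ →ₗ[ℝ] Module.Dual ℝ V₀ :=
    { toFun := fun x =>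
        { toFun := fun u => M x u.1
          map_add' := by intro u v; exact (M x).map_add u.1 v.1
          map_smul' := by intro r u; exact (M x).map_smul r u.1 }
      map_add' := by intro x y; ext u; simp; rfl
      map_smul' := by intro r x; ext u; simp; rfl } with hθ
  have hθker : LinearMap.ker θ ≤
      LinearMap.ker (mfderiv IQ 𝓘(ℝ, EG →L[ℝ] ℝ) (fun y => Jd (q₀, y)) q₁).toLinearMap := by
    intro x hx
    refine (hker x).mpr ?_
    intro u hu
    exact LinearMap.congr_fun hx ⟨u, hu⟩
  -- dimension count
  have hrn := LinearMap.finrank_range_add_finrank_ker θ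
  have hrθ : Module.finrank ℝ (LinearMap.range θ) ≤ Module.finrank ℝ V₀ := by
    calc Module.finrank ℝ (LinearMap.range θ)
        ≤ Module.finrank ℝ (Module.Dual ℝ V₀) := Submodule.finrank_le _
      _ = Module.finrank ℝ V₀ := Subspace.dual_finrank_eq
  have hkerθ : Module.finrank ℝ (LinearMap.ker θ) ≤ Module.finrank ℝ
      (LinearMap.ker (mfderiv IQ 𝓘(ℝ, EG →L[ℝ] ℝ) (fun y => Jd (q₀, y)) q₁).toLinearMap) :=
    Submodule.finrank_mono hθker
  have hV₀le : Module.finrank ℝ V₀ ≤ Module.finrank ℝ (TangentSpace IQ q₁) := by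
    have h1 : Module.finrank ℝ V₀ ≤ Module.finrank ℝ (TangentSpace IQ q₀) :=
      Submodule.finrank_le _
    have h2 : Module.finrank ℝ (TangentSpace IQ q₀) = Module.finrank ℝ (TangentSpace IQ q₁) :=
      rfl
    omega
  -- codisjointness
  have hsup : V₁ ⊔ (LinearMap.ker (mfderiv IQ 𝓘(ℝ, EG →L[ℝ] ℝ) (fun y => Jd (q₀, y)) q₁).toLinearMap)
      = ⊤ := by
    apply Submodule.eq_top_of_finrank_eq
    refine le_antisymm (Submodule.finrank_le _) ?_
    have hsum := Submodule.finrank_sup_add_finrank_inf_eq V₁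
      (LinearMap.ker (mfderiv IQ 𝓘(ℝ, EG →L[ℝ] ℝ) (fun y => Jd (q₀, y)) q₁).toLinearMap)
    rw [disjoint_iff.mp hdisj, finrank_bot] at hsum
    omega
  exact ⟨hdisj, codisjoint_iff.mpr hsup⟩
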